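/- Let A be a real symmetric n×n matrix with eigenvalues λ₁,…,λₙ and suppose κ + δ·λᵢ·λⱼ ≥ 0 for all i < j (nonnegative sectional curvature), where κ, δ ∈ ℝ. Then κ·(n·tr(A²) − (tr A)²) + δ·((tr A)·tr(A³) − (tr A²)²) ≥ 0. -/
import Mathlib

lemma sum_pair_identity {n : ℕ} (l : Fin n → ℝ) (κ δ : ℝ) :
    ∑ i, ∑ j, (κ + δ * l i * l j) * (l i - l j) ^ 2
      = 2 * (κ * ((n : ℝ) * (∑ i, l i ^ 2) - (∑ i, l i) ^ 2)
        + δ * ((∑ i, l i) * (∑ i, l i ^ 3) - (∑ i, l i ^ 2) ^ 2)) := by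
  have expand : ∀ i j : Fin n, (κ + δ * l i * l j) * (l i - l j) ^ 2
      = κ * l i ^ 2 + ((-2*κ*l i + δ*l i^3) * l j
        + ((κ - 2*δ*l i^2) * l j ^ 2 + (δ*l i) * l j ^ 3)) :=
    fun i j => by ring
  simp only [expand, Finset.sum_add_distrib, Finset.sum_sub_distrib, ← Finset.mul_sum,
    Finset.sum_const, Finset.card_univ, Fintype.card_fin, nsmul_eq_mul, ← Finset.sum_mul]
  ring

lemma trace_pow_eq {n : ℕ} (A : Matrix (Fin n) (Fin n) ℝ) (hA : A.IsHermitian) (k : ℕ) :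
    (A ^ k).trace = ∑ i, hA.eigenvalues i ^ k := by
  set U : Matrix (Fin n) (Fin n) ℝ := (hA.eigenvectorUnitary : Matrix (Fin n) (Fin n) ℝ)
  set D : Matrix (Fin n) (Fin n) ℝ := Matrix.diagonal (RCLike.ofReal ∘ hA.eigenvalues)
  have hU : star U * U = 1 := (Matrix.mem_unitaryGroup_iff').mp hA.eigenvectorUnitary.2
  have hU' : U * star U = 1 := (Matrix.mem_unitaryGroup_iff).mp hA.eigenvectorUnitary.2
  have hAeq : A = U * D * star U := hA.spectral_theorem
  have hstep : A ^ k = U * D ^ k * star U := by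
    induction k with
    | zero => simp [pow_zero, hU']
    | succ m ih =>
      calc A ^ (m + 1) = (U * D ^ m * star U) * (U * D * star U) := by
            rw [pow_succ, ih, ← hAeq]
        _ = U * D ^ m * (star U * U) * D * star U := by simp only [Matrix.mul_assoc]
        _ = U * D ^ (m + 1) * star U := by
            rw [hU, Matrix.mul_one, pow_succ]; simp only [Matrix.mul_assoc]
  rw [hstep, Matrix.trace_mul_comm, ← Matrix.mul_assoc, hU, Matrix.one_mul]
  rw [show D ^ k = Matrix.diagonal (fun i => (RCLike.ofReal ∘ hA.eigenvalues) i ^ k) from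
    Matrix.diagonal_pow _ k]
  rw [Matrix.trace_diagonal]
  simp

/-- If the "sectional curvatures" `κ + δ λᵢ λⱼ` are nonnegative for `i < j`, then
`κ (n tr A² − (tr A)²) + δ ((tr A)(tr A³) − (tr A²)²) ≥ 0` for a symmetric matrix `A`
with eigenvalues `λ i`. -/
theorem stmt_8 {n : ℕ} (A : Matrix (Fin n) (Fin n) ℝ) (hA : A.IsHermitian) (κ δ : ℝ)
    (h : ∀ i j : Fin n, i < j →
      0 ≤ κ + δ * hA.eigenvalues i * hA.eigenvalues j) :
    0 ≤ κ * ((n : ℝ) * (A ^ 2).trace - A.trace ^ 2)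
      + δ * (A.trace * (A ^ 3).trace - ((A ^ 2).trace) ^ 2) := by
  set l := hA.eigenvalues with hl
  have h1 : A.trace = ∑ i, l i := by
    have := trace_pow_eq A hA 1; simpa using this
  have h2 : (A ^ 2).trace = ∑ i, l i ^ 2 := trace_pow_eq A hA 2
  have h3 : (A ^ 3).trace = ∑ i, l i ^ 3 := trace_pow_eq A hA 3
  have hsum : 0 ≤ ∑ i, ∑ j, (κ + δ * l i * l j) * (l i - l j) ^ 2 := by
    apply Finset.sum_nonneg; intro i _
    apply Finset.sum_nonneg; intro j _
    rcases lt_trichotomy i j with hij | hij | hij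
    · exact mul_nonneg (h i j hij) (sq_nonneg _)
    · simp [hij]
    · have h' := h j i hij
      have heq : κ + δ * l i * l j = κ + δ * l j * l i := by ring
      rw [heq]
      exact mul_nonneg h' (sq_nonneg _)
  rw [sum_pair_identity l κ δ] at hsum
  rw [h1, h2, h3]
  linarith
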